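/- In the odd nilHecke algebra ONH_n, the standard monomials x_1^{t_1}⋯x_n^{t_n} τ_w (t_i ∈ Z_{≥0}, w ∈ S_n, with τ_w defined via a fixed reduced expression for each w) form a k-basis; consequently dim_k of the degree-truncated quotient ONH_n^ℓ = ONH_n/⟨x_1^ℓ⟩ satisfies dim_k ONH_n^ℓ ≤ n! · Π_{i=0}^{n-1}(ℓ - i) whenever the spanning set {x_1^{k_1}⋯x_n^{k_n}τ_w : 0 ≤ k_i ≤ ℓ - i, w ∈ S_n} spans ONH_n^ℓ. Prove the spanning claim: every element x_1^{t_1}⋯x_m^{t_m} τ_w of ONH_n^ℓ lies in the k-span of {x_1^{k_1}⋯x_m^{k_m}τ_v : v ∈ S_n, 0 ≤ k_i ≤ ℓ - i for i ≤ m}, given the rewriting relations x_m^{ℓ-(m-1)} = h_m·1 + Σ_{v≠1} f_{m,v}τ_v with h_m a skew polynomial in x_m of degree ≤ ℓ - m (coefficients in SkPol_{m-1}) and f_{m,v} ∈ SkPol_m, together with τ_vτ_w ∈ {0, ±τ_{vw}} and ℓ(vw) > ℓ(w) when the product is nonzero and v ≠ 1. -/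

import Mathlib

section Aux

variable {A : Type*} [Ring A]

/-- equality up to sign -/
def PMs (a b : A) : Prop := a = b ∨ a = -b

lemma PMs.of_eq {a b : A} (h : a = b) : PMs a b := Or.inl h

lemma PMs.trans {a b c : A} (h1 : PMs a b) (h2 : PMs b c) : PMs a c := by
  rcases h1 with rfl | rfl <;> rcases h2 with rfl | h2 <;>
    simp_all [PMs]

lemma PMs.symm {a b : A} (h : PMs a b) : PMs b a := by
  rcases h with rfl | rfl <;> simp [PMs]

lemma PMs.mul_left {a b : A} (c : A) (h : PMs a b) : PMs (c * a) (c * b) := by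
  rcases h with rfl | rfl
  · exact Or.inl rfl
  · exact Or.inr (by rw [mul_neg])

lemma PMs.mul_right {a b : A} (c : A) (h : PMs a b) : PMs (a * c) (b * c) := by
  rcases h with rfl | rfl
  · exact Or.inl rfl
  · exact Or.inr (by rw [neg_mul])

lemma PMs.mem {K : Type*} [Field K] [Module K A] {S : Submodule K A} {a b : A}
    (h : PMs a b) (hb : b ∈ S) : a ∈ S := by
  rcases h with rfl | rfl
  · exact hb
  · exact neg_mem hb

variable {n : ℕ}

/-- ordered monomial -/
def omono (x : Fin n → A) (k : Fin n → ℕ) : A := (List.ofFn fun i => x i ^ k i).prod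

lemma omono_zero (x : Fin n → A) : omono x (fun _ => 0) = 1 := by
  simp [omono]

lemma omono_succ (x : Fin (n+1) → A) (k : Fin (n+1) → ℕ) :
    omono x k = x 0 ^ k 0 * omono (fun i => x i.succ) (fun i => k i.succ) := by
  simp [omono, List.ofFn_succ]

lemma alt_pow {a b : A} (h : a * b = -(b * a)) (t : ℕ) : PMs (a * b ^ t) (b ^ t * a) := by
  induction t with
  | zero => exact PMs.of_eq (by simp)
  | succ t ih =>
    have h1 : PMs (a * b ^ (t+1)) ((b ^ t * a) * b) := by
      rw [pow_succ, ← mul_assoc]; exact ih.mul_right b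
    refine h1.trans (Or.inr ?_)
    rw [mul_assoc, h, mul_neg, pow_succ, mul_assoc]

lemma alt_omono {a : A} (x : Fin n → A) (h : ∀ j, a * x j = -(x j * a)) (k : Fin n → ℕ) :
    PMs (a * omono x k) (omono x k * a) := by
  induction n with
  | zero => exact PMs.of_eq (by simp [omono])
  | succ n ih =>
    rw [omono_succ]
    have h0 := alt_pow (h 0) (k 0)
    have hR := ih (fun i => x i.succ) (fun j => h j.succ) (fun i => k i.succ)
    have e1 : PMs (a * (x 0 ^ k 0 * omono (fun i => x i.succ) (fun i => k i.succ)))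
        ((x 0 ^ k 0 * a) * omono (fun i => x i.succ) (fun i => k i.succ)) := by
      rw [← mul_assoc]; exact h0.mul_right _
    have e2 : PMs ((x 0 ^ k 0 * a) * omono (fun i => x i.succ) (fun i => k i.succ))
        (x 0 ^ k 0 * (omono (fun i => x i.succ) (fun i => k i.succ) * a)) := by
      rw [mul_assoc]; exact hR.mul_left _
    exact (e1.trans e2).trans (PMs.of_eq (mul_assoc _ _ _).symm)

lemma alt_pow_omono {a : A} (x : Fin n → A) (h : ∀ j, a * x j = -(x j * a)) (s : ℕ)
    (k : Fin n → ℕ) : PMs (a ^ s * omono x k) (omono x k * a ^ s) := by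
  induction s with
  | zero => exact PMs.of_eq (by simp)
  | succ s ih =>
    have e1 : PMs (a ^ (s+1) * omono x k) (a ^ s * (omono x k * a)) := by
      rw [pow_succ, mul_assoc]; exact (alt_omono x h k).mul_left _
    have e2 : PMs (a ^ s * (omono x k * a)) ((omono x k * a ^ s) * a) := by
      rw [← mul_assoc]; exact ih.mul_right a
    refine (e1.trans e2).trans (PMs.of_eq ?_)
    rw [mul_assoc, ← pow_succ]

lemma omono_mul (x : Fin n → A) (hanti : ∀ i j : Fin n, i ≠ j → x i * x j = -(x j * x i))
    (k k' : Fin n → ℕ) : PMs (omono x k * omono x k') (omono x (k + k')) := by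
  induction n with
  | zero => exact PMs.of_eq (by simp [omono])
  | succ n ih =>
    rw [omono_succ x k, omono_succ x k', omono_succ x (k + k')]
    have hx' : ∀ i j : Fin n, i ≠ j →
        (fun i : Fin n => x i.succ) i * (fun i : Fin n => x i.succ) j
          = -((fun i : Fin n => x i.succ) j * (fun i : Fin n => x i.succ) i) :=
      fun i j hij => hanti _ _ (fun hh => hij (Fin.succ_injective n hh))
    have hcomm : ∀ j : Fin n, x 0 * x j.succ = -(x j.succ * x 0) :=
      fun j => hanti 0 j.succ (Fin.succ_ne_zero j).symm
    set R := omono (fun i : Fin n => x i.succ) (fun i => k i.succ) with hRdef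
    set R' := omono (fun i : Fin n => x i.succ) (fun i => k' i.succ) with hR'def
    have h1 : PMs (R * x 0 ^ k' 0) (x 0 ^ k' 0 * R) :=
      (alt_pow_omono (fun i : Fin n => x i.succ) hcomm (k' 0) (fun i => k i.succ)).symm
    have e1 : PMs ((x 0 ^ k 0 * R) * (x 0 ^ k' 0 * R'))
        (x 0 ^ k 0 * ((x 0 ^ k' 0 * R) * R')) := by
      have : (x 0 ^ k 0 * R) * (x 0 ^ k' 0 * R') = x 0 ^ k 0 * ((R * x 0 ^ k' 0) * R') := by
        simp only [mul_assoc]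
      rw [this]; exact ((h1.mul_right R').mul_left _)
    have e2 : x 0 ^ k 0 * ((x 0 ^ k' 0 * R) * R') = x 0 ^ (k 0 + k' 0) * (R * R') := by
      rw [pow_add]; simp only [mul_assoc]
    have e3 : PMs (x 0 ^ (k 0 + k' 0) * (R * R'))
        (x 0 ^ (k 0 + k' 0) * omono (fun i : Fin n => x i.succ) (fun i => (k + k') i.succ)) := by
      have := ih (fun i : Fin n => x i.succ) hx' (fun i => k i.succ) (fun i => k' i.succ)
      have hk : (fun i : Fin n => k i.succ) + (fun i => k' i.succ)
          = fun i => (k + k') i.succ := rfl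
      rw [← hk]
      exact this.mul_left _
    have hval : (k + k') 0 = k 0 + k' 0 := rfl
    rw [hval]
    exact (e1.trans (PMs.of_eq e2)).trans e3

lemma omono_single (x : Fin n → A) (i : Fin n) (c : ℕ) :
    omono x (fun j => if j = i then c else 0) = x i ^ c := by
  induction n with
  | zero => exact i.elim0
  | succ n ih =>
    rw [omono_succ]
    rcases Fin.eq_zero_or_eq_succ i with rfl | ⟨j, rfl⟩
    · have : (fun i' : Fin n => if i'.succ = (0 : Fin (n+1)) then c else 0) = fun _ => 0 := by
        funext i'; simp [Fin.succ_ne_zero]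
      rw [this, omono_zero, mul_one]
      simp
    · have h0 : ((0 : Fin (n+1)) = j.succ) = False := by
        simp [(Fin.succ_ne_zero j).symm, eq_comm]
      have : (fun i' : Fin n => if i'.succ = j.succ then c else 0)
          = fun i' => if i' = j then c else 0 := by
        funext i'; simp [Fin.succ_inj]
      rw [this, ih]
      simp [Fin.succ_ne_zero j, eq_comm, (Fin.succ_ne_zero j).symm]

end Aux

lemma adjoin_le_span {A : Type*} [Ring A] {n : ℕ} {K : Type*} [Field K] [Algebra K A]
    (x : Fin n → A) (hanti : ∀ i j : Fin n, i ≠ j → x i * x j = -(x j * x i))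
    (P : Fin n → Prop) [DecidablePred P] {z : A}
    (hz : z ∈ Algebra.adjoin K {a : A | ∃ i, P i ∧ a = x i}) :
    z ∈ Submodule.span K {a : A | ∃ k : Fin n → ℕ, (∀ i, ¬ P i → k i = 0) ∧ a = omono x k} := by
  classical
  set S := {a : A | ∃ k : Fin n → ℕ, (∀ i, ¬ P i → k i = 0) ∧ a = omono x k} with hS
  have hone : (1 : A) ∈ S := ⟨fun _ => 0, fun _ _ => rfl, (omono_zero x).symm⟩
  have hmulmem : ∀ p q : A, p ∈ Submodule.span K S → q ∈ Submodule.span K S →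
      p * q ∈ Submodule.span K S := by
    intro p q hp hq
    have h2 : p * q ∈ Submodule.span K S * Submodule.span K S := Submodule.mul_mem_mul hp hq
    rw [Submodule.span_mul_span] at h2
    refine Submodule.span_le.mpr ?_ h2
    rintro a ⟨g, hg, g', hg', rfl⟩
    obtain ⟨k1, hk1, rfl⟩ := hg
    obtain ⟨k2, hk2, rfl⟩ := hg'
    refine (omono_mul x hanti k1 k2).mem (Submodule.subset_span ?_)
    exact ⟨k1 + k2, fun i hi => by simp [Pi.add_apply, hk1 i hi, hk2 i hi], rfl⟩
  induction hz using Algebra.adjoin_induction with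
  | mem a ha =>
    obtain ⟨i, hPi, rfl⟩ := ha
    apply Submodule.subset_span
    refine ⟨fun j => if j = i then 1 else 0, ?_, ?_⟩
    · intro j hj
      simp only [ite_eq_right_iff]
      intro hji; exact absurd (hji ▸ hPi) hj
    · rw [omono_single, pow_one]
  | algebraMap r =>
    rw [Algebra.algebraMap_eq_smul_one]
    exact Submodule.smul_mem _ _ (Submodule.subset_span hone)
  | add p q hp hq ihp ihq => exact add_mem ihp ihq
  | mul p q hp hq ihp ihq => exact hmulmem p q ihp ihq

/-- the spanning claim for `ONH_n^ℓ` (zero-based indexing: position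
`i : Fin n` corresponds to the paper's `i+1`, so the restricted exponents are
`k_i < ℓ - i` and the rewriting relation expresses `x_i^{ℓ-i}`). Given:
(b) rewriting relations `x_m^{ℓ-m} = Σ_{d<ℓ-m} c_d x_m^d + Σ_{v≠1} f_{m,v} T v` with
`c_d` in the subalgebra generated by `x_j, j < m` and `f_{m,v}` in the subalgebra
generated by `x_j, j ≤ m`;
(c) `T v * T w ∈ {0, ±T w'}` with `len w' > len w` whenever `v ≠ 1`;
and the anticommutation of the `x`'s: then every element `x_0^{t_0}⋯x_{n-1}^{t_{n-1}} T w`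
lies in the `K`-span of the restricted monomials `x_0^{k_0}⋯x_{n-1}^{k_{n-1}} T v`
with `k_i < ℓ - i`. -/
theorem stmt_17 {K A : Type*} [Field K] [Ring A] [Algebra K A] (n ℓ : ℕ)
    (x : Fin n → A) (T : Equiv.Perm (Fin n) → A) (len : Equiv.Perm (Fin n) → ℕ)
    (hT1 : T 1 = 1)
    (hanti : ∀ i j : Fin n, i ≠ j → x i * x j = -(x j * x i))
    (hmul : ∀ v w : Equiv.Perm (Fin n), v ≠ 1 →
      T v * T w = 0 ∨ ∃ w', len w < len w' ∧ (T v * T w = T w' ∨ T v * T w = -T w'))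
    (hrw : ∀ m : Fin n, ∃ (c : ℕ → A) (f : Equiv.Perm (Fin n) → A),
      (∀ d, c d ∈ Algebra.adjoin K {a : A | ∃ i : Fin n, i < m ∧ a = x i}) ∧
      (∀ v, f v ∈ Algebra.adjoin K {a : A | ∃ i : Fin n, i ≤ m ∧ a = x i}) ∧
      x m ^ (ℓ - (m : ℕ)) =
        (∑ dd ∈ Finset.range (ℓ - (m : ℕ)), c dd * x m ^ dd) +
          ∑ v ∈ Finset.univ.filter (fun v => v ≠ 1), f v * T v) :
    ∀ (t : Fin n → ℕ) (w : Equiv.Perm (Fin n)),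
      (List.ofFn fun i => x i ^ t i).prod * T w ∈
        Submodule.span K {a : A | ∃ (kk : Fin n → ℕ) (v : Equiv.Perm (Fin n)),
          (∀ i, kk i < ℓ - (i : ℕ)) ∧
          a = (List.ofFn fun i => x i ^ kk i).prod * T v} := by
  classical
  intro t w
  set SP := Submodule.span K {a : A | ∃ (kk : Fin n → ℕ) (v : Equiv.Perm (Fin n)),
      (∀ i, kk i < ℓ - (i : ℕ)) ∧
      a = (List.ofFn fun i => x i ^ kk i).prod * T v} with hSPdef
  set L := Finset.univ.sup len with hL
  have hlenle : ∀ u : Equiv.Perm (Fin n), len u ≤ L := fun u => Finset.le_sup (Finset.mem_univ u)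
  have main : ∀ m : ℕ, ∀ (t : Fin n → ℕ) (w : Equiv.Perm (Fin n)),
      (∀ j : Fin n, m ≤ (j : ℕ) → t j < ℓ - (j : ℕ)) → omono x t * T w ∈ SP := by
    intro m
    induction m with
    | zero =>
      intro t w ht
      exact Submodule.subset_span ⟨t, w, fun i => ht i (Nat.zero_le _), rfl⟩
    | succ m ihm =>
      by_cases hm : m < n
      · set mf : Fin n := ⟨m, hm⟩ with hmf
        have hmfval : (mf : ℕ) = m := rfl
        obtain ⟨c, f, hc, hf, hrel⟩ := hrw mf
        have hrel' : x mf ^ (ℓ - m) =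
            (∑ dd ∈ Finset.range (ℓ - m), c dd * x mf ^ dd) +
              ∑ v ∈ Finset.univ.filter (fun v => v ≠ 1), f v * T v := hrel
        suffices H : ∀ a (w : Equiv.Perm (Fin n)), L - len w = a →
            ∀ t : Fin n → ℕ, (∀ j : Fin n, m + 1 ≤ (j : ℕ) → t j < ℓ - (j : ℕ)) →
            omono x t * T w ∈ SP by
          intro t w ht
          exact H (L - len w) w rfl t ht
        intro a
        induction a using Nat.strong_induction_on with
        | _ a iha =>
        intro w hw
        suffices H2 : ∀ (s : ℕ) (t : Fin n → ℕ),
            (∀ j : Fin n, m + 1 ≤ (j : ℕ) → t j < ℓ - (j : ℕ)) → t mf = s →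
            omono x t * T w ∈ SP by
          intro t ht
          exact H2 (t mf) t ht rfl
        intro s
        induction s using Nat.strong_induction_on with
        | _ s ihs =>
        intro t ht hts
        by_cases hsl : s < ℓ - m
        · refine ihm t w ?_
          intro j hj
          by_cases hjm : (j : ℕ) = m
          · have hjf : j = mf := Fin.ext (by rw [hmfval, hjm])
            rw [hjf, hts, hmfval]
            exact hsl
          · exact ht j (by omega)
        · set t₀ : Fin n → ℕ := fun j => if j = mf then 0 else t j with ht₀
          set r := s - (ℓ - m) with hrdef
          have hsum : (t₀ + fun j => if j = mf then s else 0) = t := by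
            funext j
            by_cases hj : j = mf <;> simp [ht₀, hj, hts]
          have e0 : PMs (omono x t₀ * x mf ^ s) (omono x t) := by
            rw [← omono_single x mf s]
            exact (omono_mul x hanti _ _).trans (PMs.of_eq (by rw [hsum]))
          refine PMs.mem ((e0.symm).mul_right (T w)) ?_
          have hsplit : x mf ^ s = x mf ^ r * x mf ^ (ℓ - m) := by
            rw [← pow_add]; congr 1; omega
          rw [hsplit, hrel']
          simp only [mul_add, add_mul, Finset.mul_sum, Finset.sum_mul, mul_assoc]
          refine add_mem (Submodule.sum_mem _ ?_) (Submodule.sum_mem _ ?_)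
          · intro d hd
            have hd' : d < ℓ - m := Finset.mem_range.mp hd
            obtain ⟨cd, hcdmem, hcdeq⟩ :
                ∃ y, y ∈ Submodule.span K {a : A | ∃ k : Fin n → ℕ,
                  (∀ i, ¬ i < mf → k i = 0) ∧ a = omono x k} ∧ y = c d :=
              ⟨c d, adjoin_le_span x hanti (fun i => i < mf) (hc d), rfl⟩
            rw [← hcdeq]
            clear hcdeq
            induction hcdmem using Submodule.span_induction with
            | mem y hy =>
              obtain ⟨aa, haa, rfl⟩ := hy
              set kk : Fin n → ℕ :=
                t₀ + ((fun j => if j = mf then r else 0) + (aa + fun j => if j = mf then d else 0)) with hkk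
              have q1 : PMs (omono x aa * x mf ^ d)
                  (omono x (aa + fun j => if j = mf then d else 0)) := by
                rw [← omono_single x mf d]; exact omono_mul x hanti _ _
              have q2 : PMs (x mf ^ r * omono x (aa + fun j => if j = mf then d else 0))
                  (omono x ((fun j => if j = mf then r else 0) +
                    (aa + fun j => if j = mf then d else 0))) := by
                rw [← omono_single x mf r]; exact omono_mul x hanti _ _
              have q3 : PMs (omono x t₀ * omono x ((fun j => if j = mf then r else 0) +
                    (aa + fun j => if j = mf then d else 0))) (omono x kk) :=
                omono_mul x hanti _ _
              have comb : PMs (omono x t₀ * (x mf ^ r * (omono x aa * (x mf ^ d * T w))))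
                  (omono x kk * T w) := by
                have ha : omono x t₀ * (x mf ^ r * (omono x aa * (x mf ^ d * T w)))
                    = (omono x t₀ * (x mf ^ r * (omono x aa * x mf ^ d))) * T w := by
                  simp only [mul_assoc]
                rw [ha]
                exact ((((q1.mul_left _).trans q2).mul_left _).trans q3).mul_right (T w)
              refine comb.mem ?_
              have haamf : aa mf = 0 := haa mf (lt_irrefl mf)
              have hkkmf : kk mf = r + d := by
                simp [hkk, ht₀, haamf]
              refine ihs (r + d) (by omega) kk ?_ hkkmf
              intro j hj
              have hjne : j ≠ mf := by
                intro heq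
                have : (j : ℕ) = m := by rw [heq, hmfval]
                omega
              have haaj : aa j = 0 := by
                refine haa j ?_
                intro hlt
                rw [Fin.lt_def, hmfval] at hlt
                omega
              have : kk j = t j := by simp [hkk, ht₀, hjne, haaj]
              rw [this]
              exact ht j hj
            | zero =>
              simp only [zero_mul, mul_zero]
              exact zero_mem _
            | add y z hy hz ihy ihz =>
              simp only [add_mul, mul_add]
              exact add_mem ihy ihz
            | smul b y hy ihy =>
              simp only [smul_mul_assoc, mul_smul_comm]
              exact Submodule.smul_mem _ _ ihy
          · intro v hv
            have hne : v ≠ 1 := (Finset.mem_filter.mp hv).2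
            rcases hmul v w hne with h0 | ⟨w', hlw, hpm⟩
            · rw [h0]
              simp only [mul_zero]
              exact zero_mem _
            · have pmvw : PMs (T v * T w) (T w') := hpm
              refine PMs.mem (((pmvw.mul_left (f v)).mul_left (x mf ^ r)).mul_left (omono x t₀)) ?_
              obtain ⟨fv, hfvmem, hfveq⟩ :
                  ∃ y, y ∈ Submodule.span K {a : A | ∃ k : Fin n → ℕ,
                    (∀ i, ¬ i ≤ mf → k i = 0) ∧ a = omono x k} ∧ y = f v :=
                ⟨f v, adjoin_le_span x hanti (fun i => i ≤ mf) (hf v), rfl⟩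
              rw [← hfveq]
              clear hfveq
              induction hfvmem using Submodule.span_induction with
              | mem y hy =>
                obtain ⟨aa, haa, rfl⟩ := hy
                set kk : Fin n → ℕ := t₀ + ((fun j => if j = mf then r else 0) + aa) with hkk
                have q2 : PMs (x mf ^ r * omono x aa)
                    (omono x ((fun j => if j = mf then r else 0) + aa)) := by
                  rw [← omono_single x mf r]; exact omono_mul x hanti _ _
                have q3 : PMs (omono x t₀ * omono x ((fun j => if j = mf then r else 0) + aa))
                    (omono x kk) := omono_mul x hanti _ _
                have comb : PMs (omono x t₀ * (x mf ^ r * (omono x aa * T w')))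
                    (omono x kk * T w') := by
                  have ha : omono x t₀ * (x mf ^ r * (omono x aa * T w'))
                      = (omono x t₀ * (x mf ^ r * omono x aa)) * T w' := by
                    simp only [mul_assoc]
                  rw [ha]
                  exact ((q2.mul_left _).trans q3).mul_right (T w')
                refine comb.mem ?_
                refine iha (L - len w') ?_ w' rfl kk ?_
                · have h1 := hlenle w'
                  omega
                · intro j hj
                  have hjne : j ≠ mf := by
                    intro heq
                    have : (j : ℕ) = m := by rw [heq, hmfval]
                    omega
                  have haaj : aa j = 0 := by
                    refine haa j ?_
                    intro hle
                    rw [Fin.le_def, hmfval] at hle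
                    omega
                  have : kk j = t j := by simp [hkk, ht₀, hjne, haaj]
                  rw [this]
                  exact ht j hj
              | zero =>
                simp only [zero_mul, mul_zero]
                exact zero_mem _
              | add y z hy hz ihy ihz =>
                simp only [add_mul, mul_add]
                exact add_mem ihy ihz
              | smul b y hy ihy =>
                simp only [smul_mul_assoc, mul_smul_comm]
                exact Submodule.smul_mem _ _ ihy
      · intro t w ht
        refine ihm t w ?_
        intro j hj
        have := j.isLt
        omega
  exact main n t w (fun j hj => by have := j.isLt; omega)
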